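/- Let U be a vector space over ℂ (or any ℚ-algebra setting in which the relevant exponentials and binomial series converge formally), and let L(-1), L(0) be operators on U satisfying [L(0), L(-1)] = L(-1). Then as formal power series in x with operator coefficients, e^{x L(-1)} (1+x)^{L(0)} = (1+x)^{L(-1)+L(0)}, where (1+x)^A denotes the formal binomial series ∑_{j≥0} C(A, j) x^j with C(A,j) = A(A-1)⋯(A-j+1)/j!. -/

import Mathlib

noncomputable section

/-- Descending Pochhammer-type operator product `A(A-1)⋯(A-(j-1))` for an
endomorphism `A` of a complex vector space `U`. -/
def opDescPoch {U : Type*} [AddCommGroup U] [Module ℂ U] (A : Module.End ℂ U) :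
    ℕ → Module.End ℂ U
  | 0 => 1
  | (j + 1) => opDescPoch A j * (A - (j : ℂ) • 1)

/-- The formal binomial series `(1+x)^A = ∑_{j≥0} C(A, j) x^j` with
`C(A,j) = A(A-1)⋯(A-j+1)/j!`, as a power series with operator coefficients. -/
def opBinomSeries {U : Type*} [AddCommGroup U] [Module ℂ U] (A : Module.End ℂ U) :
    PowerSeries (Module.End ℂ U) :=
  PowerSeries.mk fun j => ((j.factorial : ℂ)⁻¹) • opDescPoch A j

/-- The formal exponential series `e^{xA} = ∑_{n≥0} x^n A^n / n!`. -/
def opExpSeries {U : Type*} [AddCommGroup U] [Module ℂ U] (A : Module.End ℂ U) :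
    PowerSeries (Module.End ℂ U) :=
  PowerSeries.mk fun n => ((n.factorial : ℂ)⁻¹) • A ^ n

section Aux

variable {U : Type*} [AddCommGroup U] [Module ℂ U]

lemma opDescPoch_comm (A : Module.End ℂ U) (n : ℕ) :
    A * opDescPoch A n = opDescPoch A n * A := by
  induction n with
  | zero => simp [opDescPoch]
  | succ n ih =>
    have hc : A * (A - (n : ℂ) • 1) = (A - (n : ℂ) • 1) * A := by
      simp [mul_sub, sub_mul, mul_smul_comm, smul_mul_assoc]
    rw [opDescPoch, ← mul_assoc, ih, mul_assoc, hc, ← mul_assoc]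

lemma coeff_opBinom (A : Module.End ℂ U) (j : ℕ) :
    PowerSeries.coeff j (opBinomSeries A) = ((j.factorial : ℂ)⁻¹) • opDescPoch A j := by
  simp [opBinomSeries]

lemma coeff_opExp (A : Module.End ℂ U) (j : ℕ) :
    PowerSeries.coeff j (opExpSeries A) = ((j.factorial : ℂ)⁻¹) • A ^ j := by
  simp [opExpSeries]

lemma factorial_inv_succ (j : ℕ) :
    ((j + 1 : ℕ) : ℂ) * ((j + 1).factorial : ℂ)⁻¹ = ((j.factorial : ℂ))⁻¹ := by
  have h2 : ((j + 1 : ℕ) : ℂ) ≠ 0 := Nat.cast_ne_zero.mpr (Nat.succ_ne_zero j)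
  have hf : (((j + 1).factorial : ℕ) : ℂ) = ((j + 1 : ℕ) : ℂ) * (j.factorial : ℂ) := by
    rw [Nat.factorial_succ]; push_cast; ring
  rw [hf, mul_inv, ← mul_assoc, mul_inv_cancel₀ h2, one_mul]

lemma binom_rec (A : Module.End ℂ U) (j : ℕ) :
    ((j + 1 : ℕ) : ℂ) • PowerSeries.coeff (j + 1) (opBinomSeries A)
      = PowerSeries.coeff j (opBinomSeries A) * (A - (j : ℂ) • 1) := by
  rw [coeff_opBinom, coeff_opBinom, opDescPoch, smul_smul, factorial_inv_succ,
    smul_mul_assoc]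

lemma exp_rec (A : Module.End ℂ U) (k : ℕ) :
    ((k + 1 : ℕ) : ℂ) • PowerSeries.coeff (k + 1) (opExpSeries A)
      = A * PowerSeries.coeff k (opExpSeries A) := by
  rw [coeff_opExp, coeff_opExp, smul_smul, factorial_inv_succ, mul_smul_comm,
    pow_succ']

lemma comm_pow (Lm1 L0 : Module.End ℂ U) (h : L0 * Lm1 - Lm1 * L0 = Lm1) (k : ℕ) :
    L0 * Lm1 ^ k = Lm1 ^ k * L0 + (k : ℂ) • Lm1 ^ k := by
  induction k with
  | zero => simp
  | succ k ih =>
    have h' : L0 * Lm1 = Lm1 * L0 + Lm1 := sub_eq_iff_eq_add'.mp h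
    calc L0 * Lm1 ^ (k + 1) = (L0 * Lm1 ^ k) * Lm1 := by rw [pow_succ, ← mul_assoc]
    _ = (Lm1 ^ k * L0 + (k : ℂ) • Lm1 ^ k) * Lm1 := by rw [ih]
    _ = Lm1 ^ k * (L0 * Lm1) + (k : ℂ) • Lm1 ^ (k + 1) := by
        rw [add_mul, mul_assoc, smul_mul_assoc, pow_succ]
    _ = Lm1 ^ (k + 1) * L0 + ((k : ℂ) + 1) • Lm1 ^ (k + 1) := by
        rw [h', mul_add, pow_succ, add_smul, one_smul, ← mul_assoc]; abel
    _ = Lm1 ^ (k + 1) * L0 + ((k + 1 : ℕ) : ℂ) • Lm1 ^ (k + 1) := by push_cast; ring_nf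

lemma coeffExp_mul_L0 (Lm1 L0 : Module.End ℂ U) (h : L0 * Lm1 - Lm1 * L0 = Lm1) (k : ℕ) :
    PowerSeries.coeff k (opExpSeries Lm1) * L0
      = L0 * PowerSeries.coeff k (opExpSeries Lm1)
        - (k : ℂ) • PowerSeries.coeff k (opExpSeries Lm1) := by
  have h2 : Lm1 ^ k * L0 = L0 * Lm1 ^ k - (k : ℂ) • Lm1 ^ k := by
    rw [comm_pow Lm1 L0 h k]; abel
  rw [coeff_opExp, smul_mul_assoc, h2, smul_sub, mul_smul_comm, smul_comm]

lemma coeffBinom_mul_self (A : Module.End ℂ U) (j : ℕ) :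
    PowerSeries.coeff j (opBinomSeries A) * A
      = A * PowerSeries.coeff j (opBinomSeries A) := by
  rw [coeff_opBinom, smul_mul_assoc, mul_smul_comm, opDescPoch_comm]

/-- Abstract form of the recurrence satisfied by the coefficients of
`e^{xL(-1)}·(1+x)^{L0}`. -/
lemma sum_rec (E B : ℕ → Module.End ℂ U) (Lm1 L0 : Module.End ℂ U)
    (hE1 : ∀ k, ((k + 1 : ℕ) : ℂ) • E (k + 1) = Lm1 * E k)
    (hB1 : ∀ j, ((j + 1 : ℕ) : ℂ) • B (j + 1) = B j * (L0 - (j : ℂ) • 1))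
    (hEL : ∀ k, E k * L0 = L0 * E k - (k : ℂ) • E k)
    (hBL : ∀ j, B j * L0 = L0 * B j) (n : ℕ) :
    ((n + 1 : ℕ) : ℂ) • ∑ k ∈ Finset.range (n + 2), E k * B (n + 1 - k)
      = ((Lm1 + L0) - (n : ℂ) • 1) * ∑ k ∈ Finset.range (n + 1), E k * B (n - k) := by
  rw [Finset.smul_sum]
  have key : ∀ k ∈ Finset.range (n + 2),
      ((n + 1 : ℕ) : ℂ) • (E k * B (n + 1 - k))
        = (k : ℂ) • (E k * B (n + 1 - k)) + ((n + 1 - k : ℕ) : ℂ) • (E k * B (n + 1 - k)) := by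
    intro k hk
    rw [Finset.mem_range] at hk
    rw [← add_smul, ← Nat.cast_add, (by omega : k + (n + 1 - k) = n + 1)]
  rw [Finset.sum_congr rfl key, Finset.sum_add_distrib]
  have hS1 : ∑ k ∈ Finset.range (n + 2), (k : ℂ) • (E k * B (n + 1 - k))
      = Lm1 * ∑ k ∈ Finset.range (n + 1), E k * B (n - k) := by
    rw [Finset.sum_range_succ', Finset.mul_sum]
    simp only [Nat.cast_zero, zero_smul, add_zero]
    refine Finset.sum_congr rfl fun k hk => ?_
    rw [(by omega : n + 1 - (k + 1) = n - k), ← smul_mul_assoc, hE1 k, mul_assoc]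
  have hS2 : ∑ k ∈ Finset.range (n + 2), ((n + 1 - k : ℕ) : ℂ) • (E k * B (n + 1 - k))
      = L0 * (∑ k ∈ Finset.range (n + 1), E k * B (n - k))
        - (n : ℂ) • ∑ k ∈ Finset.range (n + 1), E k * B (n - k) := by
    rw [Finset.sum_range_succ]
    simp only [Nat.sub_self, Nat.cast_zero, zero_smul, add_zero]
    rw [Finset.mul_sum, Finset.smul_sum, ← Finset.sum_sub_distrib]
    refine Finset.sum_congr rfl fun k hk => ?_
    rw [Finset.mem_range] at hk
    rw [(by omega : n + 1 - k = (n - k) + 1), ← mul_smul_comm, hB1 (n - k)]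
    have h3 : E k * (B (n - k) * (L0 - ((n - k : ℕ) : ℂ) • 1))
        = E k * B (n - k) * L0 - ((n - k : ℕ) : ℂ) • (E k * B (n - k)) := by
      rw [mul_sub (B (n - k)),
        (show B (n - k) * (((n - k : ℕ) : ℂ) • 1) = ((n - k : ℕ) : ℂ) • B (n - k) by
          rw [mul_smul_comm, mul_one]),
        mul_sub, mul_smul_comm, ← mul_assoc]
    rw [h3, mul_assoc, hBL (n - k), ← mul_assoc, hEL k, sub_mul, smul_mul_assoc,
      mul_assoc, sub_sub, ← add_smul, ← Nat.cast_add, (by omega : k + (n - k) = n)]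
  rw [hS1, hS2, sub_mul, add_mul, smul_mul_assoc, one_mul]
  abel

lemma lhs_rec (Lm1 L0 : Module.End ℂ U) (h : L0 * Lm1 - Lm1 * L0 = Lm1) (n : ℕ) :
    ((n + 1 : ℕ) : ℂ) • PowerSeries.coeff (n + 1) (opExpSeries Lm1 * opBinomSeries L0)
      = ((Lm1 + L0) - (n : ℂ) • 1)
          * PowerSeries.coeff n (opExpSeries Lm1 * opBinomSeries L0) := by
  rw [PowerSeries.coeff_mul, PowerSeries.coeff_mul,
    Finset.Nat.sum_antidiagonal_eq_sum_range_succ_mk,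
    Finset.Nat.sum_antidiagonal_eq_sum_range_succ_mk]
  exact sum_rec (fun k => PowerSeries.coeff k (opExpSeries Lm1))
    (fun j => PowerSeries.coeff j (opBinomSeries L0)) Lm1 L0
    (fun k => exp_rec Lm1 k) (fun j => binom_rec L0 j)
    (fun k => coeffExp_mul_L0 Lm1 L0 h k) (fun j => coeffBinom_mul_self L0 j) n

lemma binom_rec_left (A : Module.End ℂ U) (n : ℕ) :
    ((n + 1 : ℕ) : ℂ) • PowerSeries.coeff (n + 1) (opBinomSeries A)
      = (A - (n : ℂ) • 1) * PowerSeries.coeff n (opBinomSeries A) := by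
  rw [binom_rec, mul_sub, sub_mul, coeffBinom_mul_self]
  congr 1
  rw [mul_smul_comm, mul_one, smul_mul_assoc, one_mul]

end Aux

/-- Let `U` be a complex vector space and `L(-1)`, `L(0)` operators on `U` with
`[L(0), L(-1)] = L(-1)`.  Then, as formal power series in `x` with operator
coefficients, `e^{x L(-1)} (1+x)^{L(0)} = (1+x)^{L(-1)+L(0)}`. -/
theorem exp_mul_binom_eq_binom_add {U : Type*} [AddCommGroup U] [Module ℂ U]
    (Lm1 L0 : Module.End ℂ U) (h : L0 * Lm1 - Lm1 * L0 = Lm1) :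
    opExpSeries Lm1 * opBinomSeries L0 = opBinomSeries (Lm1 + L0) := by
  refine PowerSeries.ext fun n => ?_
  induction n with
  | zero =>
    simp [PowerSeries.coeff_zero_eq_constantCoeff, opExpSeries, opBinomSeries, opDescPoch,
      ← PowerSeries.coeff_zero_eq_constantCoeff, PowerSeries.coeff_mul]
  | succ n ih =>
    have hn : ((n + 1 : ℕ) : ℂ) ≠ 0 := Nat.cast_ne_zero.mpr (Nat.succ_ne_zero n)
    have h1 := lhs_rec Lm1 L0 h n
    have h2 := binom_rec_left (Lm1 + L0) n
    rw [ih] at h1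
    rw [← h2] at h1
    exact smul_right_injective _ hn h1
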